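/- Let A be a bounded operator on a Hilbert space such that 1 - A - A* is positive definite. Then A(1 - A)⁻¹ is a strict contraction, i.e., ‖A(1-A)⁻¹‖ < 1. -/

import Mathlib

open ContinuousLinearMap in
theorem stmt1 {H : Type*} [NormedAddCommGroup H] [InnerProductSpace ℂ H] [CompleteSpace H]
    (A : H →L[ℂ] H)
    (hpos : ∃ c : ℝ, 0 < c ∧ ∀ x : H,
      c * ‖x‖ ^ 2 ≤ (inner ℂ (((1 : H →L[ℂ] H) - A - adjoint A) x) x : ℂ).re) :
    ‖A * Ring.inverse ((1 : H →L[ℂ] H) - A)‖ < 1 := by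
  obtain ⟨c, hc, hpos⟩ := hpos
  have hre : ∀ u v : H, (inner ℂ u v : ℂ).re = (inner ℂ v u : ℂ).re := by
    intro u v
    rw [← inner_conj_symm]
    exact Complex.conj_re _
  set B : H →L[ℂ] H := 1 - A with hBdef
  -- basic inner ℂ product expansion
  have key : ∀ x : H, c * ‖x‖ ^ 2 ≤ ‖x‖ ^ 2 - 2 * (inner ℂ (A x) x : ℂ).re := by
    intro x
    have h := hpos x
    have h1 : ((1 : H →L[ℂ] H) - A - adjoint A) x = x - A x - adjoint A x := by
      simp
    rw [h1] at h
    have h2 : (inner ℂ (x - A x - adjoint A x) x : ℂ) =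
        inner ℂ x x - inner ℂ (A x) x - inner ℂ (adjoint A x) x := by
      simp [inner_sub_left]
    rw [h2] at h
    have h3 : (inner ℂ (adjoint A x) x : ℂ) = inner ℂ x (A x) := adjoint_inner_left A x x
    have h4 : ((inner ℂ x (A x) : ℂ)).re = ((inner ℂ (A x) x : ℂ)).re := hre x (A x)
    have h5 : ((inner ℂ x x : ℂ)).re = ‖x‖ ^ 2 := by
      rw [← RCLike.re_to_complex]; exact inner_self_eq_norm_sq x
    simp only [Complex.sub_re, h3, h4, h5] at h
    linarith
  -- coercivity of B
  have hcoer : ∀ x : H, (1 + c) / 2 * ‖x‖ ^ 2 ≤ (inner ℂ (B x) x : ℂ).re := by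
    intro x
    have h := key x
    have h1 : B x = x - A x := by simp [hBdef]
    have h2 : (inner ℂ (B x) x : ℂ).re = ‖x‖ ^ 2 - (inner ℂ (A x) x : ℂ).re := by
      rw [h1, inner_sub_left]
      have : ((inner ℂ x x : ℂ)).re = ‖x‖ ^ 2 := by
        rw [← RCLike.re_to_complex]; exact inner_self_eq_norm_sq x
      simp [this]
      rw [← Complex.ofReal_pow, Complex.ofReal_re]
    rw [h2]; linarith
  -- norm estimate: ‖A x‖² + c ‖x‖² ≤ ‖B x‖²
  have hest : ∀ x : H, ‖A x‖ ^ 2 + c * ‖x‖ ^ 2 ≤ ‖B x‖ ^ 2 := by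
    intro x
    have h1 : B x = x - A x := by simp [hBdef]
    have h2 : ‖B x‖ ^ 2 = ‖x‖ ^ 2 - 2 * (inner ℂ x (A x) : ℂ).re + ‖A x‖ ^ 2 := by
      rw [h1, ← RCLike.re_to_complex]; exact norm_sub_sq x (A x)
    have h4 : ((inner ℂ x (A x) : ℂ)).re = ((inner ℂ (A x) x : ℂ)).re := hre x (A x)
    have := key x
    rw [h2, h4]; linarith
  -- antilipschitz bound: ‖x‖ ≤ 2/(1+c) * ‖B x‖
  have hbound : ∀ x : H, ‖x‖ ≤ (2 / (1 + c)) * ‖B x‖ := by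
    intro x
    have h1 := hcoer x
    have h2 : (inner ℂ (B x) x : ℂ).re ≤ ‖B x‖ * ‖x‖ := by rw [← RCLike.re_to_complex]; exact re_inner_le_norm (B x) x
    rcases eq_or_lt_of_le (norm_nonneg x) with h | h
    · simp [← h]
      positivity
    · have : (1 + c) / 2 * ‖x‖ ≤ ‖B x‖ := by
        nlinarith
      rw [div_mul_eq_mul_div, le_div_iff₀ (by linarith)]
      linarith
  have hanti : AntilipschitzWith (⟨2 / (1 + c), by positivity⟩ : NNReal) B :=
    B.antilipschitz_of_bound hbound
  -- bijectivity of B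
  have hinj : Function.Injective B := hanti.injective
  have hclosed : IsClosed (Set.range B) := hanti.isClosed_range B.uniformContinuous
  have hsurj : Function.Surjective B := by
    have hcl : IsClosed ((LinearMap.range (B : H →ₗ[ℂ] H)) : Set H) := by
      convert hclosed using 1
      exact LinearMap.coe_range _
    haveI : CompleteSpace (LinearMap.range (B : H →ₗ[ℂ] H)) := hcl.completeSpace_coe
    have horth : (LinearMap.range (B : H →ₗ[ℂ] H))ᗮ = ⊥ := by
      rw [Submodule.eq_bot_iff]
      intro y hy
      have h0 : (inner ℂ (B y) y : ℂ) = 0 := by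
        have := (Submodule.mem_orthogonal (LinearMap.range (B : H →ₗ[ℂ] H)) y).mp hy (B y)
          (LinearMap.mem_range_self _ y)
        exact this
      have h1 := hcoer y
      rw [h0] at h1
      simp at h1
      have : ‖y‖ ^ 2 ≤ 0 := by nlinarith
      have : ‖y‖ = 0 := by nlinarith [sq_nonneg ‖y‖, norm_nonneg y]
      exact norm_eq_zero.mp this
    have : LinearMap.range (B : H →ₗ[ℂ] H) = ⊤ := Submodule.orthogonal_eq_bot_iff.mp horth
    exact LinearMap.range_eq_top.mp this
  have hB : IsUnit B := ContinuousLinearMap.isUnit_iff_bijective.mpr ⟨hinj, hsurj⟩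
  -- main bound
  rcases subsingleton_or_nontrivial H with hH | hH
  · have : (A * Ring.inverse B) = 0 := Subsingleton.elim _ _
    rw [this]; simp
  · obtain ⟨x0, hx0⟩ := exists_ne (0 : H)
    set r := ‖B‖ with hr
    have hx0n : 0 < ‖x0‖ := norm_pos_iff.mpr hx0
    have hrpos : 0 < r := by
      have h1 := hcoer x0
      have hBx0 : B x0 ≠ 0 := by
        intro h0
        rw [h0] at h1
        simp at h1
        nlinarith
      have hBne : B ≠ 0 := fun h => hBx0 (by simp [h])
      exact norm_pos_iff.mpr hBne
    have hcr : c ≤ r ^ 2 := by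
      have h1 := hest x0
      have h2 : ‖B x0‖ ≤ r * ‖x0‖ := B.le_opNorm x0
      nlinarith [norm_nonneg (A x0), norm_nonneg (B x0), sq_nonneg (‖A x0‖),
        pow_le_pow_left₀ (norm_nonneg (B x0)) h2 2, mul_pos hx0n hx0n]
    set k := Real.sqrt (1 - c / r ^ 2) with hk
    have hfrac : 0 < c / r ^ 2 := by positivity
    have hfrac1 : c / r ^ 2 ≤ 1 := by
      rw [div_le_one (by positivity)]; exact hcr
    have hklt : k < 1 := by
      have h1 : k ^ 2 = 1 - c / r ^ 2 := Real.sq_sqrt (by linarith)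
      nlinarith [Real.sqrt_nonneg (1 - c / r ^ 2)]
    refine lt_of_le_of_lt (ContinuousLinearMap.opNorm_le_bound _ (Real.sqrt_nonneg _) ?_) hklt
    intro y
    set x := Ring.inverse B y with hx
    have hBx : B x = y := by
      have : (B * Ring.inverse B) y = y := by
        rw [Ring.mul_inverse_cancel B hB]; simp
      simpa [ContinuousLinearMap.mul_apply] using this
    have happ : (A * Ring.inverse B) y = A x := by
      simp [ContinuousLinearMap.mul_apply, hx]
    rw [happ]
    have h1 : ‖A x‖ ^ 2 + c * ‖x‖ ^ 2 ≤ ‖y‖ ^ 2 := by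
      have := hest x; rw [hBx] at this; exact this
    have h2 : ‖y‖ ≤ r * ‖x‖ := by rw [← hBx]; exact B.le_opNorm x
    have h3 : ‖A x‖ ^ 2 ≤ (1 - c / r ^ 2) * ‖y‖ ^ 2 := by
      have hx2 : ‖y‖ ^ 2 / r ^ 2 ≤ ‖x‖ ^ 2 := by
        rw [div_le_iff₀ (by positivity)]
        nlinarith [norm_nonneg y, norm_nonneg x]
      have : c * (‖y‖ ^ 2 / r ^ 2) ≤ c * ‖x‖ ^ 2 :=
        mul_le_mul_of_nonneg_left hx2 hc.le
      have heq : c * (‖y‖ ^ 2 / r ^ 2) = c / r ^ 2 * ‖y‖ ^ 2 := by ring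
      nlinarith
    calc ‖A x‖ = Real.sqrt (‖A x‖ ^ 2) := by
          rw [Real.sqrt_sq (norm_nonneg _)]
      _ ≤ Real.sqrt ((1 - c / r ^ 2) * ‖y‖ ^ 2) := Real.sqrt_le_sqrt h3
      _ = k * ‖y‖ := by
          rw [Real.sqrt_mul (by linarith), Real.sqrt_sq (norm_nonneg _)]
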